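/- Let λ be a real number with 0 < λ < 1. Let γ : ℕ × ℕ → ℂ be a doubly-indexed family of complex numbers and define δ : ℕ × ℕ → ℂ by δ(0,0) = 0, δ(p+1,0) = γ(p,0), δ(0,q+1) = −(q+λ)·γ(0,q), and δ(p+1,q+1) = γ(p,q+1) − (q+λ)·γ(p+1,q) for all p, q ≥ 0. If there exist C > 0 and R > 1 such that |δ(p,q)| ≤ C·R^{p+q}·q! for all p, q, then there exist Γ > 0 and S > 1 such that |γ(p,q)| ≤ Γ·S^{p+q}·q! for all p, q. -/

import Mathlib

/-- Coefficient form of the right division by `(a - λ b)`, `0 < λ < 1`: if the coefficients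
`δ` obtained from `γ` by the stated recursion satisfy `|δ(p,q)| ≤ C R^{p+q} q!` for some
`C > 0`, `R > 1`, then `γ` satisfies a bound of the same type. -/
theorem stmt_18 (lam : ℝ) (h0 : 0 < lam) (h1 : lam < 1)
    (γ δ : ℕ × ℕ → ℂ)
    (hδ00 : δ (0, 0) = 0)
    (hδp0 : ∀ p : ℕ, δ (p + 1, 0) = γ (p, 0))
    (hδ0q : ∀ q : ℕ, δ (0, q + 1) = -((q : ℂ) + (lam : ℂ)) * γ (0, q))
    (hδ : ∀ p q : ℕ,
      δ (p + 1, q + 1) = γ (p, q + 1) - ((q : ℂ) + (lam : ℂ)) * γ (p + 1, q))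
    (h : ∃ C : ℝ, 0 < C ∧ ∃ R : ℝ, 1 < R ∧
      ∀ p q : ℕ, ‖δ (p, q)‖ ≤ C * R ^ (p + q) * q.factorial) :
    ∃ Γ : ℝ, 0 < Γ ∧ ∃ S : ℝ, 1 < S ∧
      ∀ p q : ℕ, ‖γ (p, q)‖ ≤ Γ * S ^ (p + q) * q.factorial := by
  obtain ⟨C, hC, R, hR, hbd⟩ := h
  have hR0 : (0:ℝ) < R := lt_trans one_pos hR
  have key : ∀ q p, ‖γ (p, q)‖ ≤ C * (q + 1) * R ^ (p + q + 1) * q.factorial := by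
    intro q
    induction q with
    | zero =>
      intro p
      have := hbd (p + 1) 0
      rw [hδp0 p] at this
      simpa using this
    | succ q ih =>
      intro p
      have hrec : γ (p, q + 1) = δ (p + 1, q + 1) + ((q : ℂ) + (lam : ℂ)) * γ (p + 1, q) := by
        rw [hδ p q]; ring
      have hnorm : ‖((q : ℂ) + (lam : ℂ))‖ = (q : ℝ) + lam := by
        have : ((q : ℂ) + (lam : ℂ)) = (((q : ℝ) + lam : ℝ) : ℂ) := by push_cast; ring
        rw [this, Complex.norm_real, Real.norm_of_nonneg (by positivity)]
      have h1' : ‖γ (p, q + 1)‖ ≤ ‖δ (p + 1, q + 1)‖ + ((q : ℝ) + lam) * ‖γ (p + 1, q)‖ := by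
        rw [hrec]
        refine (norm_add_le _ _).trans ?_
        rw [norm_mul, hnorm]
      have h2 : ‖δ (p + 1, q + 1)‖ ≤ C * R ^ (p + q + 2) * (q + 1).factorial := by
        have := hbd (p + 1) (q + 1)
        have e : p + 1 + (q + 1) = p + q + 2 := by ring
        rwa [e] at this
      have h3 : ‖γ (p + 1, q)‖ ≤ C * (q + 1) * R ^ (p + q + 2) * q.factorial := by
        have := ih (p + 1)
        have e : p + 1 + q + 1 = p + q + 2 := by ring
        rwa [e] at this
      have hlam1 : (q : ℝ) + lam ≤ (q : ℝ) + 1 := by linarith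
      have hγnn : (0:ℝ) ≤ ‖γ (p + 1, q)‖ := norm_nonneg _
      have hlnn : (0:ℝ) ≤ (q : ℝ) + lam := by positivity
      have h4 : ((q : ℝ) + lam) * ‖γ (p + 1, q)‖
          ≤ ((q : ℝ) + 1) * (C * (q + 1) * R ^ (p + q + 2) * q.factorial) := by
        apply mul_le_mul hlam1 h3 hγnn (by positivity)
      have hfin : ‖γ (p, q + 1)‖ ≤ C * R ^ (p + q + 2) * (q + 1).factorial
          + ((q : ℝ) + 1) * (C * (q + 1) * R ^ (p + q + 2) * q.factorial) := by
        linarith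
      have efact : ((q + 1).factorial : ℝ) = ((q : ℝ) + 1) * q.factorial := by
        rw [Nat.factorial_succ]; push_cast; ring
      have egoal : C * ((q : ℝ) + 1 + 1) * R ^ (p + (q + 1) + 1) * (q + 1).factorial
          = C * R ^ (p + q + 2) * (q + 1).factorial
            + ((q : ℝ) + 1) * (C * (q + 1) * R ^ (p + q + 2) * q.factorial) := by
        have e : p + (q + 1) + 1 = p + q + 2 := by ring
        rw [e, efact]; ring
      calc ‖γ (p, q + 1)‖ ≤ _ := hfin
        _ = C * ((q : ℝ) + 1 + 1) * R ^ (p + (q + 1) + 1) * (q + 1).factorial := egoal.symm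
        _ = C * (((q:ℕ) + 1 : ℕ) + 1) * R ^ (p + (q + 1) + 1) * (q + 1).factorial := by
            push_cast; ring
  refine ⟨C * R, by positivity, 2 * R, by linarith, fun p q => ?_⟩
  have hq : ((q : ℝ) + 1) ≤ 2 ^ (p + q) := by
    have h1 : q + 1 ≤ 2 ^ q := Nat.lt_two_pow_self (n := q)
    have h2 : (2:ℕ) ^ q ≤ 2 ^ (p + q) := Nat.pow_le_pow_right (by norm_num) (by omega)
    have := h1.trans h2
    exact_mod_cast this
  have := key q p
  have step : C * ((q : ℝ) + 1) * R ^ (p + q + 1) * q.factorial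
      ≤ C * R * (2 * R) ^ (p + q) * q.factorial := by
    have e : C * R * (2 * R) ^ (p + q) * q.factorial
        = C * (2 ^ (p + q)) * R ^ (p + q + 1) * q.factorial := by
      rw [mul_pow, pow_succ]; ring
    rw [e]
    have : C * ((q : ℝ) + 1) ≤ C * 2 ^ (p + q) :=
      mul_le_mul_of_nonneg_left hq (le_of_lt hC)
    have hpos : (0:ℝ) ≤ R ^ (p + q + 1) * q.factorial := by positivity
    nlinarith [this, hpos]
  linarith
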